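/- For an n×n real skew-symmetric matrix S with eigenvalues λ_1,…,λ_n (with multiplicity) and p = |det S| = ∏|λ_j|, the sum of the norms of the eigenvalues satisfies √(trace(S^T S) + n(n-1) p^{2/n}) ≤ Σ_j |λ_j| ≤ √(n · trace(S^T S)). -/

import Mathlib

open Matrix Polynomial

/-- The skew energy: the sum of the norms of the eigenvalues (with multiplicity). -/
noncomputable def skewEnergy {V : Type*} [Fintype V] [DecidableEq V]
    (S : Matrix V V ℝ) : ℝ :=
  (((S.map Complex.ofReal).charpoly.roots).map (fun z => ‖z‖)).sum

lemma charpoly_conj_aux {m : Type*} [Fintype m] [DecidableEq m]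
    (U D V : Matrix m m ℂ) (h1 : U * V = 1) :
    (U * D * V).charpoly = D.charpoly := by
  have hUV : (C : ℂ →+* ℂ[X]).mapMatrix U * (C : ℂ →+* ℂ[X]).mapMatrix V = 1 := by
    rw [← _root_.map_mul, h1, _root_.map_one]
  have key : charmatrix (U * D * V) =
      (C : ℂ →+* ℂ[X]).mapMatrix U * charmatrix D * (C : ℂ →+* ℂ[X]).mapMatrix V := by
    rw [charmatrix, charmatrix, _root_.map_mul, _root_.map_mul, mul_sub, sub_mul]
    congr 1
    · rw [(scalar_commute (X : ℂ[X]) (fun r => Commute.all _ r) _).symm.eq, mul_assoc, hUV,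
        mul_one]
  rw [Matrix.charpoly, Matrix.charpoly, key, det_mul, det_mul, mul_right_comm, ← det_mul,
    hUV, det_one, one_mul]

lemma charpoly_diagonal_c {m : Type*} [Fintype m] [DecidableEq m] (d : m → ℂ) :
    (Matrix.diagonal d).charpoly = ∏ i, (X - C (d i)) := by
  have h : charmatrix (Matrix.diagonal d) = Matrix.diagonal (fun i => X - C (d i)) := by
    ext i j
    by_cases h : i = j
    · subst h; simp
    · simp [charmatrix_apply, Matrix.diagonal_apply_ne _ h]
  rw [Matrix.charpoly, h, det_diagonal]

lemma skew_exists_eigs {n : ℕ} (S : Matrix (Fin n) (Fin n) ℝ) (hskew : Sᵀ = -S) :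
    ∃ μ : Fin n → ℝ,
      (Sᵀ * S).trace = ∑ i, μ i ^ 2 ∧
      |S.det| = ∏ i, |μ i| ∧
      (((S.map Complex.ofReal).charpoly.roots).map (fun z => ‖z‖)).sum
        = ∑ i, |μ i| := by
  set M : Matrix (Fin n) (Fin n) ℂ := S.map Complex.ofReal with hMdef
  have hMH : Mᴴ = -M := by
    ext i j
    have h := congrFun (congrFun hskew i) j
    simp only [transpose_apply, Matrix.neg_apply] at h
    simp [hMdef, conjTranspose_apply, Matrix.map_apply, h]
  have hA : (Complex.I • M).IsHermitian := by
    unfold Matrix.IsHermitian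
    rw [conjTranspose_smul, hMH]
    simp [Complex.star_def, Complex.conj_I]
  set μ := hA.eigenvalues with hmu
  set U : Matrix (Fin n) (Fin n) ℂ := (hA.eigenvectorUnitary : Matrix (Fin n) (Fin n) ℂ)
    with hUdef
  have hU1 : U * star U = 1 := Matrix.mem_unitaryGroup_iff.mp hA.eigenvectorUnitary.2
  have hU2 : star U * U = 1 := Matrix.mem_unitaryGroup_iff'.mp hA.eigenvectorUnitary.2
  have hspec : Complex.I • M = U * Matrix.diagonal (fun i => (μ i : ℂ)) * star U := by
    rw [hA.spectral_theorem, Unitary.conjStarAlgAut_apply]; rfl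
  set d : Fin n → ℂ := fun i => -Complex.I * (μ i : ℂ) with hd
  have hMeq : M = U * Matrix.diagonal d * star U := by
    have h0 : M = (-Complex.I) • (Complex.I • M) := by
      rw [smul_smul]; norm_num [Complex.I_mul_I]
    have hDs : Matrix.diagonal d = (-Complex.I) • Matrix.diagonal (fun i => (μ i : ℂ)) := by
      rw [← Matrix.diagonal_smul]; rfl
    rw [h0, hspec, hDs, mul_smul_comm, smul_mul_assoc]
  have hroots : M.charpoly.roots = (Finset.univ.val.map d) := by
    rw [hMeq, charpoly_conj_aux U _ (star U) hU1, charpoly_diagonal_c]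
    have h2 : (∏ i, (X - C (d i))) = ((Finset.univ.val.map d).map fun a => X - C a).prod := by
      rw [Multiset.map_map]; rfl
    rw [h2, roots_multiset_prod_X_sub_C]
  have habs : ∀ i, ‖d i‖ = |μ i| := by
    intro i
    simp [hd, Complex.norm_real]
  have hMM : M * M = U * (Matrix.diagonal d * Matrix.diagonal d) * star U := by
    rw [hMeq]
    simp only [Matrix.mul_assoc]
    rw [← Matrix.mul_assoc (star U) U, hU2, Matrix.one_mul]
  have hdd : ∀ i : Fin n, d i * d i = -((μ i : ℂ) ^ 2) := by
    intro i
    have h9 : (-Complex.I * (μ i : ℂ)) * (-Complex.I * (μ i : ℂ))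
        = (Complex.I * Complex.I) * ((μ i : ℂ) ^ 2) := by ring
    rw [hd]
    simp only []
    rw [h9, Complex.I_mul_I]
    ring
  have htrc : ((Sᵀ * S).trace : ℂ) = ((∑ i, μ i ^ 2 : ℝ) : ℂ) := by
    have h3 : ((Sᵀ * S).trace : ℂ) = ((Sᵀ * S).map Complex.ofReal).trace := by
      simp [Matrix.trace, Matrix.diag, Matrix.map_apply]
    have h4 : (Sᵀ * S).map Complex.ofReal = -(M * M) := by
      have h5 : (Sᵀ * S).map Complex.ofReal
          = Sᵀ.map Complex.ofReal * S.map Complex.ofReal :=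
        Matrix.map_mul (f := Complex.ofRealHom)
      have h6 : Sᵀ.map Complex.ofReal = -M := by
        rw [hskew]; ext i j; simp [hMdef, Matrix.map_apply]
      rw [h5, h6, neg_mul]
    rw [h3, h4, hMM, Matrix.trace_neg, Matrix.trace_mul_cycle, ← Matrix.mul_assoc, hU2,
      Matrix.one_mul, Matrix.diagonal_mul_diagonal, Matrix.trace_diagonal]
    have h7 : ∑ i, d i * d i = ∑ i, -((μ i : ℂ) ^ 2) :=
      Finset.sum_congr rfl fun i _ => hdd i
    rw [h7]
    push_cast
    rw [Finset.sum_neg_distrib, neg_neg]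
  have htr : (Sᵀ * S).trace = ∑ i, μ i ^ 2 := by exact_mod_cast htrc
  have hdetM : M.det = ∏ i, d i := by
    rw [hMeq, det_mul, det_mul, mul_right_comm, ← det_mul, hU1, det_one, one_mul, det_diagonal]
  have hdet : |S.det| = ∏ i, |μ i| := by
    have h6 : (Complex.ofReal S.det) = M.det := by
      exact RingHom.map_det Complex.ofRealHom S
    have h7 : ‖(Complex.ofReal S.det)‖ = |S.det| := by rw [Complex.norm_real, Real.norm_eq_abs]
    rw [← h7, h6, hdetM, norm_prod]
    exact Finset.prod_congr rfl fun i _ => habs i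
  refine ⟨μ, htr, hdet, ?_⟩
  rw [hroots, Multiset.map_map]
  have h8 : (Finset.univ.val.map fun i => ‖d i‖).sum
      = ∑ i, ‖d i‖ := rfl
  rw [show ((fun z => ‖z‖) ∘ d) = fun i => ‖d i‖ from rfl, h8]
  exact Finset.sum_congr rfl fun i _ => habs i

lemma energy_lower {n : ℕ} (hn : 0 < n) (a : Fin n → ℝ) (ha : ∀ i, 0 ≤ a i) :
    (∑ i, a i ^ 2) + (n : ℝ) * ((n : ℝ) - 1) * (∏ i, a i) ^ ((2 : ℝ) / n)
      ≤ (∑ i, a i) ^ 2 := by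
  set P := ∏ i, a i with hPdef
  have hPnn : 0 ≤ P := Finset.prod_nonneg fun i _ => ha i
  have hsplit : (∑ i, a i) ^ 2
      = (∑ i, a i ^ 2) + ∑ p ∈ Finset.univ.offDiag, a p.1 * a p.2 := by
    have h1 : (∑ i, a i) ^ 2 = ∑ p ∈ Finset.univ ×ˢ Finset.univ, a p.1 * a p.2 := by
      rw [sq, Finset.sum_mul_sum, ← Finset.sum_product']
    rw [h1, ← Finset.diag_union_offDiag Finset.univ,
      Finset.sum_union (Finset.disjoint_diag_offDiag _), Finset.sum_diag]
    congr 1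
    exact Finset.sum_congr rfl fun i _ => (sq (a i)).symm ▸ by ring
  have hoffnn : 0 ≤ ∑ p ∈ Finset.univ.offDiag, a p.1 * a p.2 :=
    Finset.sum_nonneg fun p _ => mul_nonneg (ha _) (ha _)
  suffices h : (n : ℝ) * ((n : ℝ) - 1) * P ^ ((2 : ℝ) / n)
      ≤ ∑ p ∈ Finset.univ.offDiag, a p.1 * a p.2 by linarith
  by_cases hP : P = 0
  · rw [hP, Real.zero_rpow (by positivity : (2 : ℝ) / n ≠ 0), mul_zero]
    exact hoffnn
  by_cases hn1 : n = 1
  · subst hn1; norm_num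
  have hn2 : 2 ≤ n := by omega
  have hP0 : 0 < P := lt_of_le_of_ne hPnn (Ne.symm hP)
  have hai : ∀ i, 0 < a i := by
    intro i
    rcases (ha i).lt_or_eq with h | h
    · exact h
    · exact absurd (Finset.prod_eq_zero (Finset.mem_univ i) h.symm) hP
  set c : ℝ := (n : ℝ) * ((n : ℝ) - 1) with hcdef
  have hnR : (2 : ℝ) ≤ (n : ℝ) := by exact_mod_cast hn2
  have hc : 0 < c := by nlinarith
  have hcard : ((Finset.univ.offDiag : Finset (Fin n × Fin n)).card : ℝ) = c := by
    rw [Finset.offDiag_card]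
    simp only [Finset.card_univ, Fintype.card_fin]
    rw [Nat.cast_sub (Nat.le_mul_of_pos_left n hn)]
    push_cast
    ring
  have hamgm := Real.geom_mean_le_arith_mean_weighted (Finset.univ.offDiag)
    (fun _ => c⁻¹) (fun p => a p.1 * a p.2)
    (fun _ _ => inv_nonneg.mpr hc.le)
    (by rw [Finset.sum_const, nsmul_eq_mul, hcard, mul_inv_cancel₀ hc.ne'])
    (fun p _ => mul_nonneg (ha _) (ha _))
  have hprodoff : ∏ p ∈ Finset.univ.offDiag, a p.1 * a p.2 = P ^ (2 * n - 2) := by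
    have hall : ∏ p ∈ Finset.univ ×ˢ Finset.univ, a p.1 * a p.2 = P ^ (2 * n) := by
      rw [Finset.prod_product]
      have h2 : ∀ i : Fin n, ∏ j, a i * a j = a i ^ n * P := by
        intro i
        rw [Finset.prod_mul_distrib, Finset.prod_const, Finset.card_univ, Fintype.card_fin]
      rw [Finset.prod_congr rfl fun i _ => h2 i, Finset.prod_mul_distrib, Finset.prod_pow,
        Finset.prod_const, Finset.card_univ, Fintype.card_fin, ← hPdef, ← pow_add, two_mul]
    have hdiag : ∏ p ∈ Finset.univ.diag, a p.1 * a p.2 = P ^ 2 := by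
      rw [Finset.prod_diag, ← Finset.prod_pow]
      exact Finset.prod_congr rfl fun i _ => by ring
    rw [← Finset.diag_union_offDiag Finset.univ,
      Finset.prod_union (Finset.disjoint_diag_offDiag _), hdiag] at hall
    have hP2 : P ^ 2 ≠ 0 := pow_ne_zero _ hP
    apply mul_left_cancel₀ hP2
    rw [hall, ← pow_add]
    congr 1
    omega
  have hlhs : ∏ p ∈ Finset.univ.offDiag, (a p.1 * a p.2) ^ (c⁻¹)
      = P ^ ((2 : ℝ) / n) := by
    rw [Real.finset_prod_rpow _ _ (fun p _ => mul_nonneg (ha _) (ha _)) _, hprodoff,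
      ← Real.rpow_natCast P (2 * n - 2), ← Real.rpow_mul hPnn]
    congr 1
    rw [Nat.cast_sub (by omega : 2 ≤ 2 * n)]
    push_cast
    have h3 : (n : ℝ) ≠ 0 := by positivity
    have h4 : (n : ℝ) - 1 ≠ 0 := by nlinarith
    field_simp [hcdef]
    ring
  rw [hlhs] at hamgm
  have h5 : ∑ p ∈ Finset.univ.offDiag, c⁻¹ * (a p.1 * a p.2)
      = c⁻¹ * ∑ p ∈ Finset.univ.offDiag, (a p.1 * a p.2) := by
    rw [Finset.mul_sum]
  rw [h5] at hamgm
  calc c * P ^ ((2 : ℝ) / n)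
      ≤ c * (c⁻¹ * ∑ p ∈ Finset.univ.offDiag, a p.1 * a p.2) := by
        exact mul_le_mul_of_nonneg_left hamgm hc.le
    _ = ∑ p ∈ Finset.univ.offDiag, a p.1 * a p.2 := by
        rw [← mul_assoc, mul_inv_cancel₀ hc.ne', one_mul]

/-- For an `n × n` real skew-symmetric matrix `S` with `p = |det S|`, the sum of the
norms of the eigenvalues satisfies
`√(trace(SᵀS) + n(n-1) p^(2/n)) ≤ Σ|λ_j| ≤ √(n · trace(SᵀS))`. -/
theorem skewEnergy_bounds {n : ℕ} (hn : 0 < n)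
    (S : Matrix (Fin n) (Fin n) ℝ) (hskew : Sᵀ = -S) :
    Real.sqrt ((Sᵀ * S).trace + (n : ℝ) * ((n : ℝ) - 1) * |S.det| ^ ((2 : ℝ) / n)) ≤
        skewEnergy S ∧
      skewEnergy S ≤ Real.sqrt ((n : ℝ) * (Sᵀ * S).trace) := by
  obtain ⟨μ, htr, hdet, hsum⟩ := skew_exists_eigs S hskew
  have hE : skewEnergy S = ∑ i, |μ i| := hsum
  set a : Fin n → ℝ := fun i => |μ i| with hadef
  have ha : ∀ i, 0 ≤ a i := fun i => abs_nonneg _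
  have hE2 : skewEnergy S = ∑ i, a i := hE
  have hEnn : 0 ≤ ∑ i, a i := Finset.sum_nonneg fun i _ => ha i
  have htr2 : (Sᵀ * S).trace = ∑ i, a i ^ 2 := by
    rw [htr]
    exact Finset.sum_congr rfl fun i _ => (sq_abs (μ i)).symm
  constructor
  · have hlow := energy_lower hn a ha
    rw [hE2]
    have h1 : (Sᵀ * S).trace + (n : ℝ) * ((n : ℝ) - 1) * |S.det| ^ ((2 : ℝ) / n)
        ≤ (∑ i, a i) ^ 2 := by
      rw [htr2, hdet]
      exact hlow
    calc Real.sqrt ((Sᵀ * S).trace + (n : ℝ) * ((n : ℝ) - 1) * |S.det| ^ ((2 : ℝ) / n))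
        ≤ Real.sqrt ((∑ i, a i) ^ 2) := Real.sqrt_le_sqrt h1
      _ = ∑ i, a i := Real.sqrt_sq hEnn
  · rw [hE2]
    have h2 : (∑ i, a i) ^ 2 ≤ (n : ℝ) * (Sᵀ * S).trace := by
      rw [htr2]
      have := sq_sum_le_card_mul_sum_sq (s := (Finset.univ : Finset (Fin n))) (f := a)
      simpa [Finset.card_univ] using this
    calc (∑ i, a i) = Real.sqrt ((∑ i, a i) ^ 2) := (Real.sqrt_sq hEnn).symm
      _ ≤ Real.sqrt ((n : ℝ) * (Sᵀ * S).trace) := Real.sqrt_le_sqrt h2
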